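/- Let G be a finite simple connected undirected graph with n ≥ 8 vertices and m edges in which every vertex has degree at least 1, and let η be a positive integer. Suppose that for each vertex v, η·d(v) mutually independent simple random walks are started at v, and all walks advance one step per round. Then for every edge e of G and every round j ≥ 1, the number X^j(e) of walks that traverse e (in either direction) at step j satisfies Pr(X^j(e) ≥ 4η·log₂ n) ≤ n^{−4}. -/

import Mathlib

set_option linter.unusedSectionVars false
set_option linter.unusedVariables false
set_option maxHeartbeats 1000000


open Finset

section Defs

variable {V : Type} [Fintype V] [DecidableEq V]

/-- Transition kernel of the simple random walk on `G`: move to a uniformly random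
neighbor. -/
noncomputable def simpleStep (G : SimpleGraph V) [DecidableRel G.Adj] (u v : V) : ℝ :=
  if G.Adj u v then 1 / (G.degree u : ℝ) else 0

/-- Law (probability mass function) of the simple random walk of length `t` started at
`x`, as a function on trajectories `Fin (t+1) → V`. -/
noncomputable def simpleWalkLaw (G : SimpleGraph V) [DecidableRel G.Adj] (x : V) (t : ℕ)
    (f : Fin (t + 1) → V) : ℝ :=
  (if f 0 = x then 1 else 0) * ∏ i : Fin t, simpleStep G (f i.castSucc) (f i.succ)

end Defs

section Aux

variable {V : Type} [Fintype V] [DecidableEq V] (G : SimpleGraph V) [DecidableRel G.Adj]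

lemma simpleStep_nonneg (u v : V) : 0 ≤ simpleStep G u v := by
  unfold simpleStep; positivity

lemma simpleWalkLaw_nonneg (x : V) (t : ℕ) (f : Fin (t+1) → V) : 0 ≤ simpleWalkLaw G x t f := by
  unfold simpleWalkLaw
  refine mul_nonneg (by positivity) (Finset.prod_nonneg fun i _ => simpleStep_nonneg G _ _)

lemma sum_simpleStep (hdeg : ∀ v : V, 1 ≤ G.degree v) (v : V) :
    ∑ u, simpleStep G v u = 1 := by
  unfold simpleStep
  rw [Finset.sum_ite, Finset.sum_const_zero, add_zero, Finset.sum_const]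
  have : Finset.filter (fun u => G.Adj v u) Finset.univ = G.neighborFinset v := by
    ext u; simp [SimpleGraph.mem_neighborFinset]
  rw [this, SimpleGraph.card_neighborFinset_eq_degree]
  have h : (0:ℝ) < (G.degree v : ℝ) := by exact_mod_cast (hdeg v)
  field_simp
  rw [nsmul_eq_mul]; field_simp

/-- distribution at time `t` started at `x` -/
noncomputable def walkDist (x : V) (t : ℕ) (u : V) : ℝ :=
  ∑ f : Fin (t+1) → V, if f (Fin.last t) = u then simpleWalkLaw G x t f else 0

lemma walkDist_nonneg (x : V) (t : ℕ) (u : V) : 0 ≤ walkDist G x t u := by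
  refine Finset.sum_nonneg fun f _ => ?_
  split <;> simp [simpleWalkLaw_nonneg]

lemma walkDist_zero (x u : V) : walkDist G x 0 u = if u = x then 1 else 0 := by
  unfold walkDist simpleWalkLaw
  have h1 : ∀ f : Fin 1 → V,
      (if f (Fin.last 0) = u then
        (if f 0 = x then (1:ℝ) else 0) * ∏ i : Fin 0, simpleStep G (f i.castSucc) (f i.succ)
       else 0)
      = (fun y => if y = u then (if y = x then (1:ℝ) else 0) else 0) ((Equiv.funUnique (Fin 1) V) f) := by
    intro f
    simp [Equiv.funUnique, Fin.last]
  rw [Fintype.sum_equiv (Equiv.funUnique (Fin 1) V) _ (fun y => if y = u then (if y = x then (1:ℝ) else 0) else 0) h1]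
  rw [Finset.sum_ite_eq' Finset.univ u]
  simp only [Finset.mem_univ, if_true]

end Aux

section Aux2
variable {V : Type} [Fintype V] [DecidableEq V] (G : SimpleGraph V) [DecidableRel G.Adj]

lemma simpleWalkLaw_snoc (x : V) (t : ℕ) (f : Fin (t+1) → V) (v : V) :
    simpleWalkLaw G x (t+1) (Fin.snoc f v) =
      simpleWalkLaw G x t f * simpleStep G (f (Fin.last t)) v := by
  unfold simpleWalkLaw
  rw [Fin.prod_univ_castSucc]
  have h0 : (Fin.snoc f v : Fin (t+2) → V) 0 = f 0 := by
    rw [show (0 : Fin (t+2)) = Fin.castSucc 0 from rfl, Fin.snoc_castSucc]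
  rw [h0]
  have hlast : ∀ i : Fin (t+1), (Fin.snoc f v : Fin (t+2) → V) i.castSucc = f i :=
    fun i => Fin.snoc_castSucc ..
  have h1 : (Fin.snoc f v : Fin (t+2) → V) (Fin.last t).succ = v := by
    rw [Fin.succ_last, Fin.snoc_last]
  have h2 : ∀ i : Fin t,
      simpleStep G ((Fin.snoc f v : Fin (t+2) → V) (i.castSucc).castSucc)
        ((Fin.snoc f v : Fin (t+2) → V) (i.castSucc).succ)
      = simpleStep G (f i.castSucc) (f i.succ) := by
    intro i
    rw [hlast, show (i.castSucc).succ = (i.succ).castSucc from (Fin.succ_castSucc i).symm,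
      hlast]
  rw [Finset.prod_congr rfl fun i _ => h2 i, hlast, h1]
  ring

/-- summing a function over trajectories of length t+1 via snoc decomposition -/
lemma sum_snoc (t : ℕ) (g : (Fin (t+2) → V) → ℝ) :
    ∑ f : Fin (t+2) → V, g f = ∑ p : V × (Fin (t+1) → V), g (Fin.snoc p.2 p.1) := by
  exact (Fintype.sum_equiv (Fin.snocEquiv (fun _ => V)) _ _ (fun p => rfl)).symm

lemma walkDist_succ (x : V) (t : ℕ) (u : V) :
    walkDist G x (t+1) u = ∑ v, walkDist G x t v * simpleStep G v u := by
  have lhs : walkDist G x (t+1) u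
      = ∑ f : Fin (t+1) → V, simpleWalkLaw G x t f * simpleStep G (f (Fin.last t)) u := by
    unfold walkDist
    rw [sum_snoc, Fintype.sum_prod_type, Finset.sum_comm]
    refine Finset.sum_congr rfl fun f _ => ?_
    have : ∀ v : V, (if (Fin.snoc f v : Fin (t+2) → V) (Fin.last (t+1)) = u then
        simpleWalkLaw G x (t+1) (Fin.snoc f v) else 0)
        = (if v = u then simpleWalkLaw G x t f * simpleStep G (f (Fin.last t)) v else 0) := by
      intro v
      rw [Fin.snoc_last, simpleWalkLaw_snoc]
    rw [Finset.sum_congr rfl fun v _ => this v, Finset.sum_ite_eq' Finset.univ u]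
    simp
  rw [lhs]
  unfold walkDist
  rw [Finset.sum_congr rfl fun v _ => Finset.sum_mul ..]
  rw [Finset.sum_comm]
  refine Finset.sum_congr rfl fun f _ => ?_
  have : ∀ v : V, (if f (Fin.last t) = v then simpleWalkLaw G x t f else 0) * simpleStep G v u
      = (if f (Fin.last t) = v then simpleWalkLaw G x t f * simpleStep G v u else 0) := by
    intro v; split <;> simp
  rw [Finset.sum_congr rfl fun v _ => this v, Finset.sum_ite_eq Finset.univ (f (Fin.last t))]
  simp

lemma sum_walkDist (hdeg : ∀ v : V, 1 ≤ G.degree v) (x : V) (t : ℕ) :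
    ∑ u, walkDist G x t u = 1 := by
  induction t with
  | zero => simp [walkDist_zero]
  | succ t ih =>
    rw [Finset.sum_congr rfl fun u _ => walkDist_succ G x t u, Finset.sum_comm]
    rw [Finset.sum_congr rfl fun v _ => (Finset.mul_sum ..).symm]
    rw [Finset.sum_congr rfl fun v _ => by rw [sum_simpleStep G hdeg v, mul_one]]
    exact ih

lemma sum_simpleWalkLaw (x : V) (t : ℕ) :
    ∑ f : Fin (t+1) → V, simpleWalkLaw G x t f = ∑ u, walkDist G x t u := by
  unfold walkDist
  rw [Finset.sum_comm]
  refine Finset.sum_congr rfl fun f _ => ?_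
  rw [Finset.sum_ite_eq Finset.univ (f (Fin.last t))]
  simp

lemma deg_mul_step (hdeg : ∀ v : V, 1 ≤ G.degree v) (v u : V) :
    (G.degree v : ℝ) * simpleStep G v u = if G.Adj v u then 1 else 0 := by
  unfold simpleStep
  have h : (0:ℝ) < (G.degree v : ℝ) := by exact_mod_cast (hdeg v)
  split <;> field_simp <;> simp

lemma sum_deg_mul_step (hdeg : ∀ v : V, 1 ≤ G.degree v) (u : V) :
    ∑ v, (G.degree v : ℝ) * simpleStep G v u = G.degree u := by
  rw [Finset.sum_congr rfl fun v _ => deg_mul_step G hdeg v u]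
  rw [Finset.sum_ite, Finset.sum_const_zero, add_zero, Finset.sum_const]
  have : Finset.filter (fun v => G.Adj v u) Finset.univ = G.neighborFinset u := by
    ext v; simp [SimpleGraph.mem_neighborFinset, G.adj_comm]
  rw [this, SimpleGraph.card_neighborFinset_eq_degree]
  simp

lemma stationary (hdeg : ∀ v : V, 1 ≤ G.degree v) (t : ℕ) (u : V) :
    ∑ x, (G.degree x : ℝ) * walkDist G x t u = G.degree u := by
  induction t generalizing u with
  | zero =>
    rw [Finset.sum_congr rfl fun x _ => by rw [walkDist_zero]]
    rw [Finset.sum_congr rfl fun x _ => (by split <;> simp_all :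
      (G.degree x : ℝ) * (if u = x then 1 else 0) = if u = x then (G.degree x : ℝ) else 0)]
    rw [Finset.sum_ite_eq Finset.univ u]
    simp
  | succ t ih =>
    rw [Finset.sum_congr rfl fun x _ => by rw [walkDist_succ]]
    rw [Finset.sum_congr rfl fun x _ => Finset.mul_sum ..]
    rw [Finset.sum_comm]
    rw [Finset.sum_congr rfl fun v _ => ?_]
    · exact sum_deg_mul_step G hdeg u
    · rw [show ∑ x, (G.degree x:ℝ) * (walkDist G x t v * simpleStep G v u)
          = (∑ x, (G.degree x:ℝ) * walkDist G x t v) * simpleStep G v u by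
        rw [Finset.sum_mul]; exact Finset.sum_congr rfl fun x _ => by ring, ih v]

/-- probability weight of crossing edge `e` in the last step of a `(t+1)`-step walk -/
noncomputable def crossProb (e : Sym2 V) (x : V) (t : ℕ) : ℝ :=
  ∑ f : Fin (t+2) → V,
    if s(f (Fin.castSucc (Fin.last t)), f (Fin.last (t+1))) = e
    then simpleWalkLaw G x (t+1) f else 0

noncomputable def edgeStep (e : Sym2 V) (v : V) : ℝ :=
  ∑ u, if s(v, u) = e then simpleStep G v u else 0

lemma crossProb_nonneg (e : Sym2 V) (x : V) (t : ℕ) : 0 ≤ crossProb G e x t := by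
  refine Finset.sum_nonneg fun f _ => ?_
  split <;> simp [simpleWalkLaw_nonneg]

lemma crossProb_eq (e : Sym2 V) (x : V) (t : ℕ) :
    crossProb G e x t = ∑ v, walkDist G x t v * edgeStep G e v := by
  unfold crossProb
  rw [sum_snoc]
  rw [Fintype.sum_prod_type, Finset.sum_comm]
  have step1 : ∀ f : Fin (t+1) → V, ∀ u : V,
      (if s((Fin.snoc f u : Fin (t+2) → V) (Fin.castSucc (Fin.last t)),
            (Fin.snoc f u : Fin (t+2) → V) (Fin.last (t+1))) = e
       then simpleWalkLaw G x (t+1) (Fin.snoc f u) else 0)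
      = simpleWalkLaw G x t f *
          (if s(f (Fin.last t), u) = e then simpleStep G (f (Fin.last t)) u else 0) := by
    intro f u
    rw [Fin.snoc_castSucc, Fin.snoc_last, simpleWalkLaw_snoc]
    split <;> ring
  rw [Finset.sum_congr rfl fun f _ =>
    Finset.sum_congr rfl fun u _ => step1 f u]
  rw [Finset.sum_congr rfl fun f _ => (Finset.mul_sum ..).symm]
  -- now LHS = ∑ f, law f * edgeStep (f last)
  unfold walkDist
  rw [Finset.sum_congr rfl fun v _ => Finset.sum_mul .., Finset.sum_comm]
  refine Finset.sum_congr rfl fun f _ => ?_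
  have : ∀ v : V, (if f (Fin.last t) = v then simpleWalkLaw G x t f else 0) * edgeStep G e v
      = if f (Fin.last t) = v then simpleWalkLaw G x t f * edgeStep G e v else 0 := by
    intro v; split <;> simp
  rw [Finset.sum_congr rfl fun v _ => this v, Finset.sum_ite_eq Finset.univ (f (Fin.last t))]
  simp only [Finset.mem_univ, if_true]
  rfl

lemma deg_mul_edgeStep (hdeg : ∀ v : V, 1 ≤ G.degree v) (a b : V) (hab : G.Adj a b) (v : V) :
    (G.degree v : ℝ) * edgeStep G s(a, b) v
      = (if v = a then 1 else 0) + (if v = b then 1 else 0) := by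
  unfold edgeStep
  rw [Finset.mul_sum]
  have key : ∀ u, (G.degree v : ℝ) * (if s(v,u) = s(a,b) then simpleStep G v u else 0)
      = if s(v,u) = s(a,b) then (if G.Adj v u then (1:ℝ) else 0) else 0 := by
    intro u
    split
    · exact deg_mul_step G hdeg v u
    · simp
  rw [Finset.sum_congr rfl fun u _ => key u]
  have hne : a ≠ b := hab.ne
  by_cases hva : v = a
  · have hcond : ∀ u : V, (s(v,u) = s(a,b)) ↔ (u = b) := by
      intro u; rw [hva]; exact Sym2.congr_right
    simp only [hcond]
    rw [Finset.sum_ite_eq' Finset.univ b (fun u => if G.Adj v u then (1:ℝ) else 0)]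
    have hadj : G.Adj v b := hva ▸ hab
    have hvb : v ≠ b := hva ▸ hne
    simp [hadj, hva, hvb, hab, hne]
  · by_cases hvb : v = b
    · have hcond : ∀ u : V, (s(v,u) = s(a,b)) ↔ (u = a) := by
        intro u; rw [hvb, Sym2.eq_swap (a := a)]; exact Sym2.congr_right
      simp only [hcond]
      rw [Finset.sum_ite_eq' Finset.univ a (fun u => if G.Adj v u then (1:ℝ) else 0)]
      have hadj : G.Adj v a := hvb ▸ hab.symm
      simp [hadj, hva, hvb, hab.symm, hne.symm]
    · have hcond : ∀ u : V, ¬ (s(v,u) = s(a,b)) := by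
        intro u h
        rw [Sym2.eq_iff] at h
        rcases h with ⟨h1, _⟩ | ⟨h1, _⟩ <;> simp_all
      simp [hcond, hva, hvb]

lemma sum_deg_crossProb (hdeg : ∀ v : V, 1 ≤ G.degree v) (a b : V) (hab : G.Adj a b)
    (t : ℕ) : ∑ x, (G.degree x : ℝ) * crossProb G s(a,b) x t = 2 := by
  rw [Finset.sum_congr rfl fun x _ => by rw [crossProb_eq, Finset.mul_sum]]
  rw [Finset.sum_comm]
  have hsw : ∀ v, ∑ x, (G.degree x : ℝ) * (walkDist G x t v * edgeStep G s(a,b) v)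
      = (G.degree v : ℝ) * edgeStep G s(a,b) v := by
    intro v
    rw [show ∑ x, (G.degree x : ℝ) * (walkDist G x t v * edgeStep G s(a,b) v)
        = (∑ x, (G.degree x : ℝ) * walkDist G x t v) * edgeStep G s(a,b) v by
      rw [Finset.sum_mul]; exact Finset.sum_congr rfl fun x _ => by ring]
    rw [stationary G hdeg t v]
  rw [Finset.sum_congr rfl fun v _ => by rw [hsw v, deg_mul_edgeStep G hdeg a b hab v]]
  rw [Finset.sum_add_distrib, Finset.sum_ite_eq' Finset.univ a, Finset.sum_ite_eq' Finset.univ b]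
  norm_num

end Aux2

section Main
variable {V : Type} [Fintype V] [DecidableEq V] (G : SimpleGraph V) [DecidableRel G.Adj]

lemma exp_numeric (η : ℕ) (hη : 0 < η) (n : ℕ) (hn : 8 ≤ n) :
    Real.exp (6 * η) * (n:ℝ)^4 ≤ (n:ℝ)^(8*η) := by
  have h8 : (8:ℝ) ≤ (n:ℝ) := by exact_mod_cast hn
  have hn0 : (0:ℝ) ≤ (n:ℝ) := by linarith
  have hexp1 : Real.exp (6*(η:ℝ)) = Real.exp 6 ^ η := by
    rw [mul_comm, Real.exp_nat_mul]
  have h6 : Real.exp 6 ≤ 4096 := by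
    calc Real.exp 6 = Real.exp 1 ^ (6:ℕ) := by rw [← Real.exp_nat_mul]; norm_num
    _ ≤ 2.7182818286 ^ (6:ℕ) :=
        pow_le_pow_left₀ (Real.exp_pos 1).le Real.exp_one_lt_d9.le 6
    _ ≤ 4096 := by norm_num
  have hmid : (4096:ℝ)^η ≤ (n:ℝ)^(8*η-4) := by
    have e1 : (4096:ℝ)^η = 2^(12*η) := by
      rw [show (4096:ℝ) = 2^(12:ℕ) by norm_num, ← pow_mul]
    have e2 : (8:ℝ)^(8*η-4) = 2^(3*(8*η-4)) := by
      rw [show (8:ℝ) = 2^(3:ℕ) by norm_num, ← pow_mul]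
    calc (4096:ℝ)^η = 2^(12*η) := e1
    _ ≤ 2^(3*(8*η-4)) := pow_le_pow_right₀ (by norm_num) (by omega)
    _ = (8:ℝ)^(8*η-4) := e2.symm
    _ ≤ (n:ℝ)^(8*η-4) := pow_le_pow_left₀ (by norm_num) h8 _
  calc Real.exp (6*η) * (n:ℝ)^4 = Real.exp 6 ^ η * (n:ℝ)^4 := by rw [hexp1]
  _ ≤ (4096:ℝ)^η * (n:ℝ)^4 := by
      have := pow_le_pow_left₀ (Real.exp_pos 6).le h6 η
      have h4 : (0:ℝ) ≤ (n:ℝ)^4 := by positivity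
      exact mul_le_mul_of_nonneg_right this h4
  _ ≤ (n:ℝ)^(8*η-4) * (n:ℝ)^4 := by
      have h4 : (0:ℝ) ≤ (n:ℝ)^4 := by positivity
      exact mul_le_mul_of_nonneg_right hmid h4
  _ = (n:ℝ)^(8*η) := by rw [← pow_add]; congr 1; omega

lemma main_bound (hn : 8 ≤ Fintype.card V) (hdeg : ∀ v : V, 1 ≤ G.degree v)
    (η : ℕ) (hη : 0 < η) (a b : V) (hab : G.Adj a b) (t : ℕ) :
    (∑ F : ((w : V) × Fin (η * G.degree w)) → Fin (t + 2) → V,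
        Set.indicator
          {F : ((w : V) × Fin (η * G.degree w)) → Fin (t + 2) → V |
            4 * (η : ℝ) * Real.logb 2 (Fintype.card V) ≤
              ((Finset.univ.filter fun idx : (w : V) × Fin (η * G.degree w) =>
                s(F idx (Fin.castSucc (Fin.last t)), F idx (Fin.last (t+1))) = s(a,b)).card : ℝ)}
          (fun F => ∏ idx : (w : V) × Fin (η * G.degree w),
            simpleWalkLaw G idx.1 (t+1) (F idx)) F)
      ≤ 1 / (Fintype.card V : ℝ) ^ 4 := by
  classical
  set n := Fintype.card V with hndef
  have hn8 : (8:ℝ) ≤ (n:ℝ) := by exact_mod_cast hn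
  have hn0 : (0:ℝ) < (n:ℝ) := by linarith
  set I := (w : V) × Fin (η * G.degree w) with hI
  set μ : (I → Fin (t+2) → V) → ℝ :=
    fun F => ∏ idx : I, simpleWalkLaw G idx.1 (t+1) (F idx) with hμ
  have hμ0 : ∀ F, 0 ≤ μ F :=
    fun F => Finset.prod_nonneg fun idx _ => simpleWalkLaw_nonneg G _ _ _
  set cross : (Fin (t+2) → V) → Prop :=
    fun f => s(f (Fin.castSucc (Fin.last t)), f (Fin.last (t+1))) = s(a,b) with hcross
  set X : (I → Fin (t+2) → V) → ℕ :=
    fun F => (Finset.univ.filter fun idx : I => cross (F idx)).card with hX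
  set a₀ : ℝ := 4 * (η : ℝ) * Real.logb 2 (n:ℝ) with ha₀
  set K : ℝ := (4:ℝ) ^ a₀ with hK
  have hK0 : 0 < K := Real.rpow_pos_of_pos (by norm_num) _
  -- step 1 : rewrite indicator
  have step1 : ∀ F : I → Fin (t+2) → V,
      Set.indicator {F : I → Fin (t+2) → V | a₀ ≤ (X F : ℝ)} μ F
        = if a₀ ≤ (X F : ℝ) then μ F else 0 := by
    intro F
    rw [Set.indicator_apply]
    simp only [Set.mem_setOf_eq]
  -- step 2 : termwise Markov bound
  have step2 : ∀ F : I → Fin (t+2) → V,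
      (if a₀ ≤ (X F : ℝ) then μ F else 0) ≤ μ F * (4:ℝ)^(X F) / K := by
    intro F
    by_cases h : a₀ ≤ (X F : ℝ)
    · rw [if_pos h]
      have hKle : K ≤ (4:ℝ)^(X F) := by
        have := Real.rpow_le_rpow_of_exponent_le (by norm_num : (1:ℝ) ≤ 4) h
        rwa [Real.rpow_natCast] at this
      rw [le_div_iff₀ hK0]
      exact mul_le_mul_of_nonneg_left hKle (hμ0 F)
    · rw [if_neg h]
      exact div_nonneg (mul_nonneg (hμ0 F) (by positivity)) hK0.le
  -- step 3 : MGF factorization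
  have step3 : ∑ F : I → Fin (t+2) → V, μ F * (4:ℝ)^(X F)
      = ∏ idx : I, (1 + 3 * crossProb G s(a,b) idx.1 t) := by
    have hper : ∀ F : I → Fin (t+2) → V, μ F * (4:ℝ)^(X F)
        = ∏ idx : I, (simpleWalkLaw G idx.1 (t+1) (F idx) *
            (if cross (F idx) then (4:ℝ) else 1)) := by
      intro F
      rw [Finset.prod_mul_distrib]
      congr 1
      refine Eq.symm ?_
      calc ∏ idx : I, (if cross (F idx) then (4:ℝ) else 1)
          = ∏ idx : I, (4:ℝ)^(if cross (F idx) then 1 else 0 : ℕ) := by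
            refine Finset.prod_congr rfl fun idx _ => ?_
            split <;> simp
        _ = (4:ℝ)^(∑ idx : I, if cross (F idx) then 1 else 0 : ℕ) :=
            Finset.prod_pow_eq_pow_sum ..
        _ = (4:ℝ)^(X F) := by rw [← Finset.card_filter]
    have hfact : (∏ idx : I, ∑ f : Fin (t+2) → V,
          simpleWalkLaw G idx.1 (t+1) f * (if cross f then (4:ℝ) else 1))
        = ∑ F : I → Fin (t+2) → V, ∏ idx : I,
            (simpleWalkLaw G idx.1 (t+1) (F idx) * (if cross (F idx) then (4:ℝ) else 1)) :=
      Fintype.prod_sum _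
    rw [Finset.sum_congr rfl fun F _ => hper F, ← hfact]
    refine Finset.prod_congr rfl fun idx _ => ?_
    have hsplit : ∀ f : Fin (t+2) → V,
        simpleWalkLaw G idx.1 (t+1) f * (if cross f then (4:ℝ) else 1)
          = simpleWalkLaw G idx.1 (t+1) f
            + 3 * (if cross f then simpleWalkLaw G idx.1 (t+1) f else 0) := by
      intro f; split <;> ring
    rw [Finset.sum_congr rfl fun f _ => hsplit f, Finset.sum_add_distrib,
      ← Finset.mul_sum, sum_simpleWalkLaw, sum_walkDist G hdeg]
    rfl
  -- step 4 : expectation bound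
  have hsumP : ∑ idx : I, crossProb G s(a,b) idx.1 t = 2 * η := by
    rw [← Finset.univ_sigma_univ, Finset.sum_sigma]
    dsimp only
    rw [Finset.sum_congr rfl fun w _ => Finset.sum_const ..]
    rw [Finset.sum_congr rfl fun w _ => by
      rw [Finset.card_univ, Fintype.card_fin, nsmul_eq_mul]]
    have : ∀ w : V, ((η * G.degree w : ℕ) : ℝ) * crossProb G s(a,b) w t
        = (η:ℝ) * ((G.degree w : ℝ) * crossProb G s(a,b) w t) := by
      intro w; push_cast; ring
    rw [Finset.sum_congr rfl fun w _ => this w, ← Finset.mul_sum,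
      sum_deg_crossProb G hdeg a b hab t]
    ring
  have step4 : ∏ idx : I, (1 + 3 * crossProb G s(a,b) idx.1 t) ≤ Real.exp (6 * η) := by
    have h1 : ∏ idx : I, (1 + 3 * crossProb G s(a,b) idx.1 t)
        ≤ ∏ idx : I, Real.exp (3 * crossProb G s(a,b) idx.1 t) := by
      refine Finset.prod_le_prod (fun idx _ => ?_) (fun idx _ => ?_)
      · have := crossProb_nonneg G s(a,b) idx.1 t; positivity
      · have := Real.add_one_le_exp (3 * crossProb G s(a,b) idx.1 t)
        linarith
    refine h1.trans ?_
    rw [← Real.exp_sum]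
    rw [← Finset.mul_sum, hsumP]
    apply le_of_eq
    congr 1
    ring
  -- assemble
  calc ∑ F : I → Fin (t+2) → V,
        Set.indicator {F : I → Fin (t+2) → V | a₀ ≤ (X F : ℝ)} μ F
      = ∑ F : I → Fin (t+2) → V, (if a₀ ≤ (X F : ℝ) then μ F else 0) :=
        Finset.sum_congr rfl fun F _ => step1 F
    _ ≤ ∑ F : I → Fin (t+2) → V, μ F * (4:ℝ)^(X F) / K :=
        Finset.sum_le_sum fun F _ => step2 F
    _ = (∑ F : I → Fin (t+2) → V, μ F * (4:ℝ)^(X F)) / K := by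
        rw [Finset.sum_div]
    _ ≤ Real.exp (6 * η) / K := by
        rw [step3]
        gcongr
    _ ≤ 1 / (n:ℝ)^4 := by
        have h24 : (2:ℝ)^(2:ℝ) = 4 := by
          rw [show (2:ℝ) = ((2:ℕ):ℝ) by norm_num, Real.rpow_natCast]
          norm_num
        have hKeq : K = (n:ℝ)^(8*η) := by
          calc K = ((2:ℝ)^(2:ℝ))^a₀ := by rw [hK, h24]
          _ = (2:ℝ)^((2:ℝ)*a₀) := (Real.rpow_mul (by norm_num) 2 a₀).symm
          _ = (2:ℝ)^(Real.logb 2 (n:ℝ) * ((8*η:ℕ):ℝ)) := by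
              congr 1
              rw [ha₀]
              push_cast
              ring
          _ = ((2:ℝ)^(Real.logb 2 (n:ℝ)))^((8*η:ℕ):ℝ) := Real.rpow_mul (by norm_num) _ _
          _ = ((n:ℝ))^((8*η:ℕ):ℝ) := by
              rw [Real.rpow_logb (by norm_num) (by norm_num) hn0]
          _ = (n:ℝ)^(8*η) := Real.rpow_natCast _ _
        rw [hKeq, div_le_div_iff₀ (by positivity) (by positivity), one_mul]
        exact exp_numeric η hη n hn

end Main

/-- start `η·d(v)` mutually independent simple random walks at every vertex
`v` (joint law = product of the individual walk laws). If the graph has `n ≥ 8` vertices,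
then for every edge `e` and round `j ≥ 1`, the number `X^j(e)` of walks traversing `e`
(in either direction) at step `j` satisfies `Pr(X^j(e) ≥ 4η·log₂ n) ≤ n^{−4}`. -/
theorem statement_16 (V : Type) [Fintype V] [DecidableEq V]
    (G : SimpleGraph V) [DecidableRel G.Adj]
    (hn : 8 ≤ Fintype.card V)
    (hconn : G.Connected) (hdeg : ∀ v : V, 1 ≤ G.degree v)
    (η : ℕ) (hη : 0 < η)
    (e : Sym2 V) (he : e ∈ G.edgeFinset) (j : ℕ) (hj : 1 ≤ j) :
    (∑ F : ((w : V) × Fin (η * G.degree w)) → Fin (j + 1) → V,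
        Set.indicator
          {F : ((w : V) × Fin (η * G.degree w)) → Fin (j + 1) → V |
            4 * (η : ℝ) * Real.logb 2 (Fintype.card V) ≤
              ((Finset.univ.filter fun idx : (w : V) × Fin (η * G.degree w) =>
                s(F idx ⟨j - 1, by omega⟩, F idx ⟨j, by omega⟩) = e).card : ℝ)}
          (fun F => ∏ idx : (w : V) × Fin (η * G.degree w), simpleWalkLaw G idx.1 j (F idx))
          F)
      ≤ 1 / (Fintype.card V : ℝ) ^ 4 := by
  obtain ⟨t, rfl⟩ : ∃ t, j = t + 1 := ⟨j - 1, by omega⟩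
  induction e using Sym2.ind with
  | _ a b =>
    have hab : G.Adj a b := by
      rw [SimpleGraph.mem_edgeFinset, SimpleGraph.mem_edgeSet] at he
      exact he
    exact main_bound G hn hdeg η hη a b hab t
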